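/- arXiv:2010.06190 — 7 statements merged into one kernel-verified Lean document; each statement's English description precedes it below -/
import Mathlib

section
/- Let κ = (3 − √5)/2. For every real numbers a ≥ b ≥ 0 with a > 0, the quantity (a² − b²)²/a² + b² is at least κ·a². -/
theorem stmt0 (a b : ℝ) (hba : b ≤ a) (hb : 0 ≤ b) (ha : 0 < a) :
    (3 - Real.sqrt 5) / 2 * a ^ 2 ≤ (a ^ 2 - b ^ 2) ^ 2 / a ^ 2 + b ^ 2 := by
  have h5 : (2:ℝ) ≤ Real.sqrt 5 := by
    nlinarith [Real.sq_sqrt (by norm_num : (5:ℝ) ≥ 0), Real.sqrt_nonneg 5]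
  have ha2 : (0:ℝ) < a ^ 2 := by positivity
  have key : (a ^ 2 - b ^ 2) ^ 2 / a ^ 2 + b ^ 2 - 3 / 4 * a ^ 2 =
      (a ^ 2 / 2 - b ^ 2) ^ 2 / a ^ 2 := by
    field_simp; ring
  nlinarith [div_nonneg (sq_nonneg (a ^ 2 / 2 - b ^ 2)) ha2.le, key]
end

section
/- Define V : [0,T] × C([−h,T], ℝⁿ) → ℝ by V(t, x(·)) = (M(t,x)² − ‖x(t)‖²)²/M(t,x)² + ‖x(t)‖² if M(t,x) > 0 and V(t,x(·)) = 0 if M(t,x) = 0, where M(t,x) = max_{τ∈[−h,t]} ‖x(τ)‖. Then V(t, x(·)) ≥ κ · M(t,x)² for all (t, x(·)), where κ = (3 − √5)/2. -/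
noncomputable section

/-- Running maximum of the Euclidean norm of the path `x` over `[-h, t]`. -/
def runMax (n : ℕ) (h t : ℝ) (x : ℝ → EuclideanSpace ℝ (Fin n)) : ℝ :=
  sSup ((fun τ => ‖x τ‖) '' Set.Icc (-h) t)

/-- The Lyapunov–Krasovskii functional `V`. -/
def Vfun (n : ℕ) (h t : ℝ) (x : ℝ → EuclideanSpace ℝ (Fin n)) : ℝ :=
  if 0 < runMax n h t x then
    ((runMax n h t x) ^ 2 - ‖x t‖ ^ 2) ^ 2 / (runMax n h t x) ^ 2 + ‖x t‖ ^ 2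
  else 0

theorem stmt1 (n : ℕ) (h T : ℝ) (hh : 0 < h) (hT : 0 < T)
    (x : ℝ → EuclideanSpace ℝ (Fin n)) (hx : ContinuousOn x (Set.Icc (-h) T))
    (t : ℝ) (ht : t ∈ Set.Icc 0 T) :
    (3 - Real.sqrt 5) / 2 * (runMax n h t x) ^ 2 ≤ Vfun n h t x := by
  obtain ⟨ht0, htT⟩ := ht
  have hsub : Set.Icc (-h) t ⊆ Set.Icc (-h) T :=
    Set.Icc_subset_Icc le_rfl htT
  have hmem : t ∈ Set.Icc (-h) t := ⟨by linarith, le_rfl⟩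
  have hcont : ContinuousOn (fun τ => ‖x τ‖) (Set.Icc (-h) t) :=
    ((hx.mono hsub).norm)
  have hcpt : IsCompact ((fun τ => ‖x τ‖) '' Set.Icc (-h) t) :=
    (isCompact_Icc).image_of_continuousOn hcont
  have hbdd : BddAbove ((fun τ => ‖x τ‖) '' Set.Icc (-h) t) := hcpt.bddAbove
  have haM : ‖x t‖ ≤ runMax n h t x :=
    le_csSup hbdd ⟨t, hmem, rfl⟩
  have ha0 : (0:ℝ) ≤ ‖x t‖ := norm_nonneg _
  have hs5 : (3:ℝ)/2 ≤ Real.sqrt 5 := by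
    rw [show (3:ℝ)/2 = Real.sqrt ((3/2)^2) by rw [Real.sqrt_sq]; norm_num]
    exact Real.sqrt_le_sqrt (by norm_num)
  set M := runMax n h t x with hM
  set a := ‖x t‖
  unfold Vfun
  rw [← hM]
  by_cases hMpos : 0 < M
  · rw [if_pos hMpos]
    rw [div_add' _ _ _ (by positivity), le_div_iff₀ (by positivity)]
    nlinarith [sq_nonneg (M^2/2 - ‖x t‖^2), sq_nonneg (M^2), mul_nonneg (by linarith : (0:ℝ) ≤ Real.sqrt 5 - 3/2) (sq_nonneg (M^2))]
  · rw [if_neg hMpos]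
    have hM0 : M = 0 := le_antisymm (not_lt.mp hMpos) (le_trans ha0 haM)
    rw [hM0]
    norm_num
end
end

section
/- A functional φ : [0,T] × C([−h,T], ℝⁿ) → ℝ is continuous with respect to the pseudometric ρ((t,x(·)),(τ,y(·))) = |t−τ| + ‖x(·∧t) − y(·∧τ)‖_{[−h,T]} if and only if φ is non-anticipative and continuous with respect to the product metric dist((t,x(·)),(τ,y(·))) = |t−τ| + ‖x(·)−y(·)‖_{[−h,T]}. -/
noncomputable section

/-- Uniform (supremum) norm of a path over `[-h, T]`. -/
def unifNorm (n : ℕ) (h T : ℝ) (x : ℝ → EuclideanSpace ℝ (Fin n)) : ℝ :=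
  sSup ((fun ξ => ‖x ξ‖) '' Set.Icc (-h) T)

/-- The path `x` stopped at time `t`: `ξ ↦ x (min ξ t)`. -/
def stopped (n : ℕ) (t : ℝ) (x : ℝ → EuclideanSpace ℝ (Fin n)) :
    ℝ → EuclideanSpace ℝ (Fin n) :=
  fun ξ => x (min ξ t)

/-- The pseudometric `ρ` on `[0,T] × C([-h,T], ℝⁿ)`. -/
def rho (n : ℕ) (h T : ℝ)
    (p q : ℝ × (ℝ → EuclideanSpace ℝ (Fin n))) : ℝ :=
  |p.1 - q.1| + unifNorm n h T (fun ξ => stopped n p.1 p.2 ξ - stopped n q.1 q.2 ξ)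

/-- The product metric `dist` on `[0,T] × C([-h,T], ℝⁿ)`. -/
def dst (n : ℕ) (h T : ℝ)
    (p q : ℝ × (ℝ → EuclideanSpace ℝ (Fin n))) : ℝ :=
  |p.1 - q.1| + unifNorm n h T (fun ξ => p.2 ξ - q.2 ξ)

/-- The domain `[0,T] × C([-h,T], ℝⁿ)`. -/
def Dom (n : ℕ) (h T : ℝ) : Set (ℝ × (ℝ → EuclideanSpace ℝ (Fin n))) :=
  {p | p.1 ∈ Set.Icc 0 T ∧ ContinuousOn p.2 (Set.Icc (-h) T)}

/-- Continuity of a real-valued functional with respect to a (pseudo)metric `d` on a set `S`. -/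
def ContWrt (n : ℕ)
    (d : ℝ × (ℝ → EuclideanSpace ℝ (Fin n)) → ℝ × (ℝ → EuclideanSpace ℝ (Fin n)) → ℝ)
    (S : Set (ℝ × (ℝ → EuclideanSpace ℝ (Fin n))))
    (φ : ℝ → (ℝ → EuclideanSpace ℝ (Fin n)) → ℝ) : Prop :=
  ∀ p ∈ S, ∀ ε > 0, ∃ δ > 0, ∀ q ∈ S, d p q < δ → |φ q.1 q.2 - φ p.1 p.2| < ε

/-- A functional is non-anticipative if its value at time `t` depends only on the
path restricted to `[-h, t]`. -/
def NonAnticipative (n : ℕ) (h T : ℝ)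
    (φ : ℝ → (ℝ → EuclideanSpace ℝ (Fin n)) → ℝ) : Prop :=
  ∀ t ∈ Set.Ico 0 T, ∀ x y : ℝ → EuclideanSpace ℝ (Fin n),
    ContinuousOn x (Set.Icc (-h) T) → ContinuousOn y (Set.Icc (-h) T) →
    (∀ τ ∈ Set.Icc (-h) t, x τ = y τ) → φ t x = φ t y

namespace Stmt4Aux

variable {n : ℕ} {h T : ℝ}

lemma unifNorm_le {x : ℝ → EuclideanSpace ℝ (Fin n)} {M : ℝ} (hM : 0 ≤ M)
    (hx : ∀ ξ ∈ Set.Icc (-h) T, ‖x ξ‖ ≤ M) : unifNorm n h T x ≤ M :=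
  Real.sSup_le (by rintro _ ⟨ξ, hξ, rfl⟩; exact hx ξ hξ) hM

lemma le_unifNorm {x : ℝ → EuclideanSpace ℝ (Fin n)}
    (hb : BddAbove ((fun ξ => ‖x ξ‖) '' Set.Icc (-h) T))
    {ξ : ℝ} (hξ : ξ ∈ Set.Icc (-h) T) : ‖x ξ‖ ≤ unifNorm n h T x :=
  le_csSup hb ⟨ξ, hξ, rfl⟩

lemma bddAbove_norm_image {x : ℝ → EuclideanSpace ℝ (Fin n)}
    (hx : ContinuousOn x (Set.Icc (-h) T)) :
    BddAbove ((fun ξ => ‖x ξ‖) '' Set.Icc (-h) T) :=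
  (isCompact_Icc.image_of_continuousOn hx.norm).bddAbove

lemma unifNorm_nonneg (hle : -h ≤ T) {x : ℝ → EuclideanSpace ℝ (Fin n)}
    (hb : BddAbove ((fun ξ => ‖x ξ‖) '' Set.Icc (-h) T)) :
    0 ≤ unifNorm n h T x :=
  le_trans (norm_nonneg (x (-h))) (le_unifNorm hb ⟨le_refl _, hle⟩)

lemma unifNorm_zero (hle : -h ≤ T) {x : ℝ → EuclideanSpace ℝ (Fin n)}
    (hx : ∀ ξ ∈ Set.Icc (-h) T, x ξ = 0) : unifNorm n h T x = 0 := by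
  have hb : BddAbove ((fun ξ => ‖x ξ‖) '' Set.Icc (-h) T) := by
    refine ⟨0, ?_⟩
    rintro _ ⟨ξ, hξ, rfl⟩
    simp [hx ξ hξ]
  have h1 : unifNorm n h T x ≤ 0 :=
    unifNorm_le le_rfl (fun ξ hξ => by simp [hx ξ hξ])
  have h2 : 0 ≤ unifNorm n h T x := unifNorm_nonneg hle hb
  linarith

lemma min_mem (hh : 0 < h) {ξ τ : ℝ} (hξ : ξ ∈ Set.Icc (-h) T)
    (hτ : τ ∈ Set.Icc 0 T) : min ξ τ ∈ Set.Icc (-h) T :=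
  ⟨le_min hξ.1 (by linarith [hτ.1]), min_le_of_left_le hξ.2⟩

lemma min_lip (ξ t τ : ℝ) : |min ξ t - min ξ τ| ≤ |t - τ| := by
  have h1 := le_abs_self (t - τ); have h2 := neg_abs_le (t - τ)
  rcases le_total ξ t with a | a <;> rcases le_total ξ τ with b | b <;>
    rw [abs_le] <;>
    simp [min_eq_left, min_eq_right, a, b] <;> constructor <;> linarith

lemma stopped_continuousOn (hh : 0 < h) {τ : ℝ} (hτ : τ ∈ Set.Icc 0 T)
    {y : ℝ → EuclideanSpace ℝ (Fin n)} (hy : ContinuousOn y (Set.Icc (-h) T)) :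
    ContinuousOn (stopped n τ y) (Set.Icc (-h) T) :=
  hy.comp (continuous_id.min continuous_const).continuousOn
    (fun _ hξ => min_mem hh hξ hτ)

lemma eq_of_contwrt_zero
    {d : ℝ × (ℝ → EuclideanSpace ℝ (Fin n)) → ℝ × (ℝ → EuclideanSpace ℝ (Fin n)) → ℝ}
    {S : Set (ℝ × (ℝ → EuclideanSpace ℝ (Fin n)))}
    {φ : ℝ → (ℝ → EuclideanSpace ℝ (Fin n)) → ℝ}
    (hC : ContWrt n d S φ) {p q : ℝ × (ℝ → EuclideanSpace ℝ (Fin n))}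
    (hp : p ∈ S) (hq : q ∈ S) (hd : d p q ≤ 0) : φ q.1 q.2 = φ p.1 p.2 := by
  by_contra hne
  have hpos : 0 < |φ q.1 q.2 - φ p.1 p.2| := abs_pos.mpr (sub_ne_zero.mpr hne)
  obtain ⟨δ, hδ, H⟩ := hC p hp _ hpos
  exact absurd (H q hq (lt_of_le_of_lt hd hδ)) (lt_irrefl _)

lemma phi_eq_stopped (hh : 0 < h) (hT : 0 < T)
    {φ : ℝ → (ℝ → EuclideanSpace ℝ (Fin n)) → ℝ}
    (hNA : NonAnticipative n h T φ) (hC : ContWrt n (dst n h T) (Dom n h T) φ)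
    {q : ℝ × (ℝ → EuclideanSpace ℝ (Fin n))} (hq : q ∈ Dom n h T) :
    φ q.1 q.2 = φ q.1 (stopped n q.1 q.2) := by
  have hle : -h ≤ T := by linarith
  have hq' : (q.1, stopped n q.1 q.2) ∈ Dom n h T :=
    ⟨hq.1, stopped_continuousOn hh hq.1 hq.2⟩
  rcases lt_or_eq_of_le hq.1.2 with hlt | heq
  · exact hNA q.1 ⟨hq.1.1, hlt⟩ q.2 (stopped n q.1 q.2) hq.2 hq'.2
      (fun τ hτ => by simp [stopped, min_eq_left hτ.2])
  · refine (eq_of_contwrt_zero hC hq hq' ?_).symm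
    have : dst n h T q (q.1, stopped n q.1 q.2) = 0 := by
      unfold dst
      rw [sub_self, abs_zero, zero_add]
      refine unifNorm_zero hle (fun ξ hξ => ?_)
      simp [stopped, min_eq_left (heq ▸ hξ.2 : ξ ≤ q.1)]
    linarith [this.le]

end Stmt4Aux

open Stmt4Aux in
theorem stmt4 (n : ℕ) (h T : ℝ) (hh : 0 < h) (hT : 0 < T)
    (φ : ℝ → (ℝ → EuclideanSpace ℝ (Fin n)) → ℝ) :
    ContWrt n (rho n h T) (Dom n h T) φ ↔
      NonAnticipative n h T φ ∧ ContWrt n (dst n h T) (Dom n h T) φ := by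
  have hle : -h ≤ T := by linarith
  constructor
  · intro hρ
    constructor
    · -- non-anticipativity
      intro t ht x y hx hy hxy
      have hp : ((t, x) : ℝ × (ℝ → EuclideanSpace ℝ (Fin n))) ∈ Dom n h T :=
        ⟨⟨ht.1, ht.2.le⟩, hx⟩
      have hq : ((t, y) : ℝ × (ℝ → EuclideanSpace ℝ (Fin n))) ∈ Dom n h T :=
        ⟨⟨ht.1, ht.2.le⟩, hy⟩
      have hd : rho n h T (t, x) (t, y) ≤ 0 := by
        unfold rho
        rw [sub_self, abs_zero, zero_add]
        refine le_of_eq (unifNorm_zero hle (fun ξ hξ => ?_))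
        have hmem : min ξ t ∈ Set.Icc (-h) t :=
          ⟨le_min hξ.1 (by linarith [ht.1]), min_le_right _ _⟩
        simp [stopped, hxy _ hmem]
      exact (eq_of_contwrt_zero hρ hp hq hd).symm
    · -- dst-continuity
      intro p hp ε hε
      obtain ⟨δ₀, hδ₀, H⟩ := hρ p hp ε hε
      have hux : UniformContinuousOn p.2 (Set.Icc (-h) T) :=
        isCompact_Icc.uniformContinuousOn_of_continuous hp.2
      rw [Metric.uniformContinuousOn_iff] at hux
      obtain ⟨δ₁, hδ₁, Hu⟩ := hux (δ₀ / 4) (by linarith)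
      refine ⟨min δ₁ (δ₀ / 4), lt_min hδ₁ (by linarith), fun q hq hdq => ?_⟩
      apply H q hq
      have hbN : BddAbove ((fun ξ => ‖p.2 ξ - q.2 ξ‖) '' Set.Icc (-h) T) :=
        bddAbove_norm_image (hp.2.sub hq.2)
      set N := unifNorm n h T (fun ξ => p.2 ξ - q.2 ξ) with hNdef
      have hN0 : 0 ≤ N := unifNorm_nonneg hle hbN
      have habs0 : 0 ≤ |p.1 - q.1| := abs_nonneg _
      have hsum : |p.1 - q.1| + N < min δ₁ (δ₀ / 4) := hdq
      have hmin1 : min δ₁ (δ₀ / 4) ≤ δ₁ := min_le_left _ _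
      have hmin2 : min δ₁ (δ₀ / 4) ≤ δ₀ / 4 := min_le_right _ _
      have hpt : ∀ ξ ∈ Set.Icc (-h) T,
          ‖stopped n p.1 p.2 ξ - stopped n q.1 q.2 ξ‖ ≤ δ₀ / 4 + N := by
        intro ξ hξ
        have hm1 : min ξ p.1 ∈ Set.Icc (-h) T := min_mem hh hξ hp.1
        have hm2 : min ξ q.1 ∈ Set.Icc (-h) T := min_mem hh hξ hq.1
        have h1 : ‖p.2 (min ξ p.1) - p.2 (min ξ q.1)‖ < δ₀ / 4 := by
          have := Hu _ hm1 _ hm2 (by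
            rw [Real.dist_eq]
            calc |min ξ p.1 - min ξ q.1| ≤ |p.1 - q.1| := min_lip ξ p.1 q.1
              _ < δ₁ := by linarith)
          rwa [dist_eq_norm] at this
        have h2 : ‖p.2 (min ξ q.1) - q.2 (min ξ q.1)‖ ≤ N :=
          le_unifNorm hbN hm2
        calc ‖stopped n p.1 p.2 ξ - stopped n q.1 q.2 ξ‖
            ≤ ‖p.2 (min ξ p.1) - p.2 (min ξ q.1)‖
              + ‖p.2 (min ξ q.1) - q.2 (min ξ q.1)‖ := by
              simpa [stopped] using
                norm_sub_le_norm_sub_add_norm_sub (p.2 (min ξ p.1))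
                  (p.2 (min ξ q.1)) (q.2 (min ξ q.1))
          _ ≤ δ₀ / 4 + N := by linarith
      have hstop : unifNorm n h T
          (fun ξ => stopped n p.1 p.2 ξ - stopped n q.1 q.2 ξ) ≤ δ₀ / 4 + N :=
        unifNorm_le (by linarith) hpt
      unfold rho
      linarith
  · rintro ⟨hNA, hC⟩
    intro p hp ε hε
    have hp' : ((p.1, stopped n p.1 p.2) : ℝ × (ℝ → EuclideanSpace ℝ (Fin n)))
        ∈ Dom n h T := ⟨hp.1, stopped_continuousOn hh hp.1 hp.2⟩
    obtain ⟨δ, hδ, H⟩ := hC (p.1, stopped n p.1 p.2) hp' ε hε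
    refine ⟨δ, hδ, fun q hq hρq => ?_⟩
    have hq' : ((q.1, stopped n q.1 q.2) : ℝ × (ℝ → EuclideanSpace ℝ (Fin n)))
        ∈ Dom n h T := ⟨hq.1, stopped_continuousOn hh hq.1 hq.2⟩
    have hdist : dst n h T (p.1, stopped n p.1 p.2) (q.1, stopped n q.1 q.2)
        = rho n h T p q := rfl
    have hkey := H (q.1, stopped n q.1 q.2) hq' (by rw [hdist]; exact hρq)
    rw [phi_eq_stopped hh hT hNA hC hq, phi_eq_stopped hh hT hNA hC hp]
    exact hkey
end
end

section
/- If a functional φ : [0,T] × C([−h,T], ℝⁿ) → ℝ is ci-differentiable at points (t, x(·)) and (t, y(·)) with x(τ) = y(τ) for all τ ∈ [−h,t], then φ(t,x(·)) = φ(t,y(·)), ∂_t φ(t,x(·)) = ∂_t φ(t,y(·)), and ∇φ(t,x(·)) = ∇φ(t,y(·)). -/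
noncomputable section

open scoped RealInnerProductSpace

/-- `y` is a Lipschitz extension of `x` beyond time `t`: it is continuous on `[-h,T]`,
agrees with `x` on `[-h,t]`, and is Lipschitz continuous on `[t,T]`. -/
def LipExt (n : ℕ) (h T t : ℝ) (x y : ℝ → EuclideanSpace ℝ (Fin n)) : Prop :=
  ContinuousOn y (Set.Icc (-h) T) ∧ (∀ τ ∈ Set.Icc (-h) t, y τ = x τ) ∧
    ∃ K : NNReal, LipschitzOnWith K y (Set.Icc t T)

/-- `φ` is ci-differentiable at `(t, x)` with ci-derivatives `a` (time) and `b` (impulse). -/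
def CiDiffAt (n : ℕ) (h T : ℝ) (φ : ℝ → (ℝ → EuclideanSpace ℝ (Fin n)) → ℝ)
    (t : ℝ) (x : ℝ → EuclideanSpace ℝ (Fin n)) (a : ℝ) (b : EuclideanSpace ℝ (Fin n)) :
    Prop :=
  ∀ y : ℝ → EuclideanSpace ℝ (Fin n), LipExt n h T t x y →
    ∃ o : ℝ → ℝ,
      (∀ τ ∈ Set.Ioc t T,
        φ τ y - φ t x = a * (τ - t) + ⟪b, y τ - x t⟫ + o (τ - t)) ∧
      Filter.Tendsto (fun δ => o δ / δ) (nhdsWithin 0 (Set.Ioi 0)) (nhds 0)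

theorem stmt6 (n : ℕ) (h T : ℝ) (hh : 0 < h) (hT : 0 < T)
    (φ : ℝ → (ℝ → EuclideanSpace ℝ (Fin n)) → ℝ)
    (t : ℝ) (ht : t ∈ Set.Ico 0 T)
    (x y : ℝ → EuclideanSpace ℝ (Fin n))
    (hx : ContinuousOn x (Set.Icc (-h) T)) (hy : ContinuousOn y (Set.Icc (-h) T))
    (hagree : ∀ τ ∈ Set.Icc (-h) t, x τ = y τ)
    (a a' : ℝ) (b b' : EuclideanSpace ℝ (Fin n))
    (hdx : CiDiffAt n h T φ t x a b) (hdy : CiDiffAt n h T φ t y a' b') :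
    φ t x = φ t y ∧ a = a' ∧ b = b' := by
  obtain ⟨ht0, htT⟩ := ht
  have hht : -h ≤ t := by linarith
  have hxyt : x t = y t := hagree t ⟨hht, le_refl t⟩
  have hT' : 0 < T - t := sub_pos.mpr htT
  -- main computation for an arbitrary direction `v`
  have key : ∀ v : EuclideanSpace ℝ (Fin n),
      φ t y - φ t x = 0 ∧ a - a' + ⟪b - b', v⟫ = 0 := by
    intro v
    classical
    set z : ℝ → EuclideanSpace ℝ (Fin n) :=
      fun τ => if τ ≤ t then x τ else x t + (τ - t) • v with hzdef
    have hz' : ∀ τ ∈ Set.Icc t T, z τ = x t + (τ - t) • v := by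
      intro τ hτ
      by_cases hc : τ ≤ t
      · have hτt : τ = t := le_antisymm hc hτ.1
        simp [hzdef, hτt]
      · simp [hzdef, hc]
    have hzcont : ContinuousOn z (Set.Icc (-h) T) := by
      apply ContinuousOn.if
      · intro s hs
        have : s ∈ frontier (Set.Iic t) := hs.2
        rw [frontier_Iic] at this
        simp only [Set.mem_singleton_iff] at this
        simp [this]
      · exact hx.mono Set.inter_subset_left
      · exact (Continuous.continuousOn (by continuity)).mono Set.inter_subset_left
    have hzlip : ∃ K : NNReal, LipschitzOnWith K z (Set.Icc t T) := by
      refine ⟨‖v‖₊, ?_⟩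
      rw [lipschitzOnWith_iff_dist_le_mul]
      intro τ₁ h1 τ₂ h2
      rw [hz' τ₁ h1, hz' τ₂ h2, dist_add_left, dist_eq_norm, ← sub_smul, norm_smul,
        Real.norm_eq_abs, Real.dist_eq]
      have : τ₁ - t - (τ₂ - t) = τ₁ - τ₂ := by ring
      rw [this, mul_comm]
      rfl
    have hzx : LipExt n h T t x z := by
      refine ⟨hzcont, ?_, hzlip⟩
      intro τ hτ
      simp [hzdef, hτ.2]
    have hzy : LipExt n h T t y z := by
      refine ⟨hzcont, ?_, hzlip⟩
      intro τ hτ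
      simp only [hzdef, hτ.2, if_pos]
      exact (hagree τ hτ).symm ▸ rfl
    obtain ⟨o, ho1, ho2⟩ := hdx z hzx
    obtain ⟨o', ho1', ho2'⟩ := hdy z hzy
    set c : ℝ := a - a' + ⟪b - b', v⟫ with hc
    have heq : ∀ δ ∈ Set.Ioc (0 : ℝ) (T - t),
        φ t y - φ t x = c * δ + o δ - o' δ := by
      intro δ hδ
      have hτmem : t + δ ∈ Set.Ioc t T := ⟨by linarith [hδ.1], by linarith [hδ.2]⟩
      have hzτ : z (t + δ) = x t + δ • v := by
        have := hz' (t + δ) ⟨by linarith [hδ.1], by linarith [hδ.2]⟩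
        simpa using this
      have e1 := ho1 (t + δ) hτmem
      have e2 := ho1' (t + δ) hτmem
      rw [hzτ] at e1 e2
      simp only [add_sub_cancel_left] at e1 e2
      rw [real_inner_smul_right] at e1
      have hy2 : x t + δ • v - y t = δ • v := by rw [← hxyt]; abel
      rw [hy2, real_inner_smul_right] at e2
      have hbb : ⟪b - b', v⟫ = ⟪b, v⟫ - ⟪b', v⟫ := inner_sub_left b b' v
      have : φ t y - φ t x = (φ (t + δ) z - φ t x) - (φ (t + δ) z - φ t y) := by ring
      rw [this, e1, e2, hc, hbb]
      ring
    have hIoc : Set.Ioc (0 : ℝ) (T - t) ∈ nhdsWithin 0 (Set.Ioi 0) :=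
      Ioc_mem_nhdsGT_of_mem ⟨le_refl 0, hT'⟩
    have hone : Filter.Tendsto (fun δ : ℝ => o δ) (nhdsWithin 0 (Set.Ioi 0)) (nhds 0) := by
      have hmul : Filter.Tendsto (fun δ : ℝ => (o δ / δ) * δ)
          (nhdsWithin 0 (Set.Ioi 0)) (nhds 0) := by
        have := ho2.mul (Filter.Tendsto.mono_left Filter.tendsto_id nhdsWithin_le_nhds)
        simpa using this
      refine hmul.congr' ?_
      filter_upwards [self_mem_nhdsWithin] with δ hδ
      exact div_mul_cancel₀ _ (ne_of_gt hδ)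
    have hone' : Filter.Tendsto (fun δ : ℝ => o' δ) (nhdsWithin 0 (Set.Ioi 0)) (nhds 0) := by
      have hmul : Filter.Tendsto (fun δ : ℝ => (o' δ / δ) * δ)
          (nhdsWithin 0 (Set.Ioi 0)) (nhds 0) := by
        have := ho2'.mul (Filter.Tendsto.mono_left Filter.tendsto_id nhdsWithin_le_nhds)
        simpa using this
      refine hmul.congr' ?_
      filter_upwards [self_mem_nhdsWithin] with δ hδ
      exact div_mul_cancel₀ _ (ne_of_gt hδ)
    -- first: φ t y - φ t x = 0
    have hD : φ t y - φ t x = 0 := by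
      have hlim : Filter.Tendsto (fun δ : ℝ => c * δ + o δ - o' δ)
          (nhdsWithin 0 (Set.Ioi 0)) (nhds 0) := by
        have hcδ : Filter.Tendsto (fun δ : ℝ => c * δ)
            (nhdsWithin 0 (Set.Ioi 0)) (nhds 0) := by
          have : Filter.Tendsto (fun δ : ℝ => c * δ) (nhds 0) (nhds (c * 0)) :=
            (continuous_const.mul continuous_id).tendsto 0
          simpa using this.mono_left nhdsWithin_le_nhds
        simpa using (hcδ.add hone).sub hone'
      have hconst : Filter.Tendsto (fun δ : ℝ => c * δ + o δ - o' δ)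
          (nhdsWithin 0 (Set.Ioi 0)) (nhds (φ t y - φ t x)) := by
        refine Filter.Tendsto.congr' ?_ tendsto_const_nhds
        filter_upwards [hIoc] with δ hδ
        exact heq δ hδ
      exact tendsto_nhds_unique hconst hlim
    refine ⟨hD, ?_⟩
    -- second: c = 0
    have hlim2 : Filter.Tendsto (fun δ : ℝ => (o' δ - o δ) / δ)
        (nhdsWithin 0 (Set.Ioi 0)) (nhds 0) := by
      have := ho2'.sub ho2
      simp only [sub_zero] at this
      refine this.congr' ?_
      filter_upwards [self_mem_nhdsWithin] with δ hδ
      rw [sub_div]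
    have hconst2 : Filter.Tendsto (fun δ : ℝ => (o' δ - o δ) / δ)
        (nhdsWithin 0 (Set.Ioi 0)) (nhds c) := by
      refine Filter.Tendsto.congr' ?_ tendsto_const_nhds
      filter_upwards [hIoc, self_mem_nhdsWithin] with δ hδ hδ'
      have := heq δ hδ
      rw [hD] at this
      have hco : o' δ - o δ = c * δ := by linarith
      rw [hco, mul_div_assoc, div_self (ne_of_gt hδ'), mul_one]
    exact tendsto_nhds_unique hconst2 hlim2
  have hDD := (key 0).1
  have ha : a = a' := by
    have h1 := (key 0).2
    simp only [inner_zero_right, add_zero] at h1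
    linarith
  refine ⟨by linarith, ha, ?_⟩
  have h2 := (key (b - b')).2
  rw [ha] at h2
  simp only [sub_self, zero_add] at h2
  exact sub_eq_zero.mp (inner_self_eq_zero.mp h2)
end
end

section
/- If a functional φ : [0,T] × C([−h,T], ℝⁿ) → ℝ is ci-smooth, then for every (t, x(·)) ∈ [0,T) × C([−h,T],ℝⁿ), every y(·) ∈ Lip(t, x(·)), and every τ ∈ [t, T): φ(τ, y(·)) = φ(t, x(·)) + ∫_t^τ ∂_t φ(ξ, y(·)) dξ + ∫_t^τ ⟨∇φ(ξ, y(·)), ẏ(ξ)⟩ dξ. -/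
noncomputable section

open scoped RealInnerProductSpace

/-- `φ` is ci-smooth with ci-derivatives `pt` and `gr`: it is continuous,
ci-differentiable at every point of `[0,T) × C([-h,T],ℝⁿ)`, and its ci-derivatives
are continuous. -/
def CiSmooth (n : ℕ) (h T : ℝ) (φ pt : ℝ → (ℝ → EuclideanSpace ℝ (Fin n)) → ℝ)
    (gr : ℝ → (ℝ → EuclideanSpace ℝ (Fin n)) → EuclideanSpace ℝ (Fin n)) : Prop :=
  ContWrt n (dst n h T) (Dom n h T) φ ∧
  (∀ t ∈ Set.Ico 0 T, ∀ x : ℝ → EuclideanSpace ℝ (Fin n),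
    ContinuousOn x (Set.Icc (-h) T) → CiDiffAt n h T φ t x (pt t x) (gr t x)) ∧
  ContWrt n (dst n h T) (Dom n h T) pt ∧
  (∀ p ∈ Dom n h T, ∀ ε > 0, ∃ δ > 0, ∀ q ∈ Dom n h T,
    dst n h T p q < δ → ‖gr q.1 q.2 - gr p.1 p.2‖ < ε)

namespace Aux7
open MeasureTheory Set Filter intervalIntegral
open scoped RealInnerProductSpace Topology

-- slope along right nhds
lemma aux_slope_right {E : Type*} [NormedAddCommGroup E] [NormedSpace ℝ E]
    {f : ℝ → E} {d : E} {s : ℝ} (hd : HasDerivAt f d s) :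
    Tendsto (slope f s) (𝓝[>] s) (𝓝 d) := by
  have h := (hd.hasDerivWithinAt (s := Set.Ioi s))
  rw [hasDerivWithinAt_iff_tendsto_slope] at h
  rwa [Set.diff_singleton_eq_self (by simp)] at h

lemma aux_shift (ξ : ℝ) : Tendsto (fun σ => σ - ξ) (𝓝[>] ξ) (𝓝[>] (0:ℝ)) := by
  apply tendsto_nhdsWithin_of_tendsto_nhds_of_eventually_within
  · have : Tendsto (fun σ => σ - ξ) (𝓝 ξ) (𝓝 (ξ - ξ)) := (continuous_sub_right ξ).tendsto ξ
    rw [sub_self] at this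
    exact this.mono_left nhdsWithin_le_nhds
  · filter_upwards [self_mem_nhdsWithin] with σ hσ
    exact Set.mem_Ioi.2 (sub_pos.2 (Set.mem_Ioi.1 hσ))

lemma aux_o {o : ℝ → ℝ} (ho : Tendsto (fun δ => o δ / δ) (𝓝[>] (0:ℝ)) (𝓝 0)) (ξ : ℝ) :
    Tendsto (fun σ => o (σ - ξ)) (𝓝[>] ξ) (𝓝 0) := by
  have h2 : Tendsto (fun σ => σ - ξ) (𝓝[>] ξ) (𝓝 (0:ℝ)) :=
    (aux_shift ξ).mono_right nhdsWithin_le_nhds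
  have h1 : Tendsto (fun σ => o (σ - ξ) / (σ - ξ) * (σ - ξ)) (𝓝[>] ξ) (𝓝 (0 * 0)) :=
    (ho.comp (aux_shift ξ)).mul h2
  rw [zero_mul] at h1
  apply h1.congr'
  filter_upwards [self_mem_nhdsWithin] with σ hσ
  have : σ - ξ ≠ 0 := ne_of_gt (sub_pos.2 hσ)
  field_simp

-- norm of derivative bounded by Lipschitz constant (on an interval, at interior pt)
lemma aux_deriv_norm_le {E : Type*} [NormedAddCommGroup E] [NormedSpace ℝ E]
    {f : ℝ → E} {K : NNReal} {a b s : ℝ} (hf : LipschitzOnWith K f (Set.Icc a b))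
    (hs : s ∈ Set.Ioo a b) {d : E} (hd : HasDerivAt f d s) : ‖d‖ ≤ K := by
  have h1 := aux_slope_right hd
  refine le_of_tendsto h1.norm ?_
  filter_upwards [Ioc_mem_nhdsGT_of_mem ⟨le_rfl, hs.2⟩] with z hz
  have hzs : (0:ℝ) < z - s := sub_pos.2 hz.1
  have hdist : dist (f z) (f s) ≤ K * dist z s :=
    hf.dist_le_mul z ⟨hs.1.le.trans hz.1.le, hz.2⟩ s ⟨hs.1.le, hs.2.le⟩
  rw [dist_eq_norm, Real.dist_eq, abs_of_pos hzs] at hdist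
  rw [slope_def_module, norm_smul, norm_inv, Real.norm_eq_abs, abs_of_pos hzs]
  rw [inv_mul_le_iff₀ hzs]
  linarith [hdist]

-- monotone FTC inequality
lemma aux_mono_integral_deriv_le {u : ℝ → ℝ} (hm : Monotone u) (hc : Continuous u)
    {a b : ℝ} (hab : a ≤ b) : ∫ x in a..b, deriv u x ≤ u b - u a := by
  have hae : ∀ᵐ x : ℝ, deriv u x = (hm.stieltjesFunction.measure.rnDeriv volume x).toReal := by
    filter_upwards [hm.ae_hasDerivAt] with x hx using hx.deriv
  have hst : ∀ x, (hm.stieltjesFunction : ℝ → ℝ) x = u x := by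
    intro x
    rw [hm.stieltjesFunction_eq]
    exact rightLim_eq_of_tendsto
      ((hc.tendsto x).mono_left nhdsWithin_le_nhds)
  rw [intervalIntegral.integral_of_le hab]
  calc (∫ x in Set.Ioc a b, deriv u x)
      = ∫ x in Set.Ioc a b, (hm.stieltjesFunction.measure.rnDeriv volume x).toReal :=
        integral_congr_ae (ae_restrict_of_ae hae)
    _ ≤ (hm.stieltjesFunction.measure (Set.Ioc a b)).toReal :=
        Measure.setIntegral_toReal_rnDeriv_le
          (by rw [StieltjesFunction.measure_Ioc]; exact ENNReal.ofReal_ne_top)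
    _ = u b - u a := by
        rw [StieltjesFunction.measure_Ioc, hst, hst,
          ENNReal.toReal_ofReal (sub_nonneg.2 (hm hab))]

lemma aux_lip_deriv_bound {f : ℝ → ℝ} {L : NNReal} (hf : LipschitzWith L f) (x : ℝ) :
    |deriv f x| ≤ L := by
  by_cases hd : DifferentiableAt ℝ f x
  · have h1 := aux_slope_right hd.hasDerivAt
    refine le_of_tendsto h1.abs ?_
    filter_upwards [self_mem_nhdsWithin] with z hz
    have hzs : (0:ℝ) < z - x := sub_pos.2 hz
    have hdist : dist (f z) (f x) ≤ L * dist z x := hf.dist_le_mul z x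
    rw [Real.dist_eq, Real.dist_eq, abs_of_pos hzs] at hdist
    rw [slope_def_field, abs_div, abs_of_pos hzs, div_le_iff₀ hzs]
    linarith [hdist]
  · simp [deriv_zero_of_not_differentiableAt hd]

-- FTC for Lipschitz functions
lemma aux_ftc_lipschitz {f : ℝ → ℝ} {L : NNReal} (hf : LipschitzWith L f) {a b : ℝ}
    (hab : a ≤ b) : ∫ x in a..b, deriv f x = f b - f a := by
  have hcont : Continuous f := hf.continuous
  have hae : ∀ᵐ x : ℝ, DifferentiableAt ℝ f x := hf.ae_differentiableAt
  have hbd : ∀ x, |deriv f x| ≤ L := aux_lip_deriv_bound hf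
  have hint : IntervalIntegrable (deriv f) volume a b := by
    rw [intervalIntegrable_iff]
    apply Integrable.mono' (g := fun _ : ℝ => (L:ℝ))
    · exact integrableOn_const measure_Ioc_lt_top.ne
    · exact (measurable_deriv f).aestronglyMeasurable.restrict
    · exact ae_of_all _ fun x => by simpa [Real.norm_eq_abs] using hbd x
  have habs : ∀ p q : ℝ, p ≤ q → |f q - f p| ≤ L * (q - p) := by
    intro p q hpq
    have := hf.dist_le_mul q p
    rw [Real.dist_eq, Real.dist_eq, abs_of_nonneg (sub_nonneg.2 hpq)] at this
    exact this
  have hm1 : Monotone fun x => f x + L * x := by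
    intro p q hpq
    have := habs p q hpq
    have h2 := abs_le.1 this
    simp only
    nlinarith [h2.1]
  have hm2 : Monotone fun x => (L:ℝ) * x - f x := by
    intro p q hpq
    have := habs p q hpq
    have h2 := abs_le.1 this
    simp only
    nlinarith [h2.2]
  have hc1 : Continuous fun x => f x + (L:ℝ) * x := by fun_prop
  have hc2 : Continuous fun x => (L:ℝ) * x - f x := by fun_prop
  have e1 : ∫ x in a..b, deriv (fun x => f x + (L:ℝ) * x) x
      = ∫ x in a..b, (deriv f x + (L:ℝ)) := by
    apply intervalIntegral.integral_congr_ae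
    filter_upwards [hae] with x hx _
    have hL : deriv (fun y : ℝ => (L:ℝ) * y) x = (L:ℝ) := by
      simpa using ((hasDerivAt_id x).const_mul ((L:ℝ))).deriv
    rw [deriv_fun_add hx (by fun_prop), hL]
  have e2 : ∫ x in a..b, deriv (fun x => (L:ℝ) * x - f x) x
      = ∫ x in a..b, ((L:ℝ) - deriv f x) := by
    apply intervalIntegral.integral_congr_ae
    filter_upwards [hae] with x hx _
    have hL : deriv (fun y : ℝ => (L:ℝ) * y) x = (L:ℝ) := by
      simpa using ((hasDerivAt_id x).const_mul ((L:ℝ))).deriv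
    rw [deriv_fun_sub (by fun_prop) hx, hL]
  have i1 := aux_mono_integral_deriv_le hm1 hc1 hab
  have i2 := aux_mono_integral_deriv_le hm2 hc2 hab
  rw [e1] at i1
  rw [e2] at i2
  rw [intervalIntegral.integral_add hint intervalIntegrable_const,
    intervalIntegral.integral_const, smul_eq_mul] at i1
  rw [intervalIntegral.integral_sub intervalIntegrable_const hint,
    intervalIntegral.integral_const, smul_eq_mul] at i2
  linarith
lemma aux_dini_one {f : ℝ → ℝ} {a b C : ℝ} (hab : a ≤ b) (hf : ContinuousOn f (Set.Icc a b))
    (hs : ∀ ξ ∈ Set.Ico a b, ∀ r, C < r → ∀ᶠ z in 𝓝[>] ξ, slope f ξ z < r) :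
    f b - f a ≤ C * (b - a) := by
  have hB : ∀ x ∈ Set.Ico a b, HasDerivWithinAt (fun x => f a + C * (x - a)) C (Set.Ici x) x := by
    intro x _
    have : HasDerivWithinAt (fun x : ℝ => f a + C * (x - a)) (0 + C * 1) (Set.Ici x) x :=
      (hasDerivWithinAt_const x _ (f a)).add
        (((hasDerivWithinAt_id x _).sub_const a).const_mul C)
    simpa using this
  have := image_le_of_liminf_slope_right_le_deriv_boundary hf
    (B := fun x => f a + C * (x - a)) (B' := fun _ => C) (by simp)
    (by fun_prop) hB
    (fun x hx r hr => ((hs x hx r hr).and self_mem_nhdsWithin).frequently.mono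
      (fun z hz => hz.1))
    (Set.right_mem_Icc.2 hab)
  have h2 : f b ≤ f a + C * (b - a) := this
  linarith

lemma aux_neg_slope {f : ℝ → ℝ} (ξ z : ℝ) : slope (fun s => -f s) ξ z = -slope f ξ z := by
  simp [slope_def_field]; ring

lemma aux_dini_lip {f : ℝ → ℝ} {a b C : ℝ} (hab : a ≤ b) (hC : 0 ≤ C)
    (hf : ContinuousOn f (Set.Icc a b))
    (hs : ∀ ξ ∈ Set.Ico a b, ∀ r, C < r → ∀ᶠ z in 𝓝[>] ξ, |slope f ξ z| < r) :
    LipschitzOnWith (Real.toNNReal C) f (Set.Icc a b) := by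
  have key : ∀ p ∈ Set.Icc a b, ∀ q ∈ Set.Icc a b, p ≤ q → |f q - f p| ≤ C * (q - p) := by
    intro p hp q hq hpq
    have hsub : Set.Icc p q ⊆ Set.Icc a b := Set.Icc_subset_Icc hp.1 hq.2
    have hsub' : Set.Ico p q ⊆ Set.Ico a b := Set.Ico_subset_Ico hp.1 hq.2
    have h1 : f q - f p ≤ C * (q - p) :=
      aux_dini_one hpq (hf.mono hsub)
        (fun ξ hξ r hr => (hs ξ (hsub' hξ) r hr).mono
          (fun z hz => lt_of_le_of_lt (le_abs_self _) hz))
    have h2 : (-f q) - (-f p) ≤ C * (q - p) := by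
      have : (fun s => -f s) q - (fun s => -f s) p ≤ C * (q - p) :=
        aux_dini_one hpq ((hf.mono hsub).neg)
          (fun ξ hξ r hr => (hs ξ (hsub' hξ) r hr).mono
            (fun z hz => by
              rw [show (-f) = fun s => -f s from rfl, aux_neg_slope]
              exact lt_of_le_of_lt (neg_le_abs _) hz))
      simpa using this
    rw [abs_le]
    constructor <;> linarith
  rw [lipschitzOnWith_iff_dist_le_mul]
  intro p hp q hq
  rw [Real.dist_eq, Real.dist_eq, Real.coe_toNNReal C hC]
  rcases le_total q p with hpq | hpq
  · rw [abs_of_nonneg (sub_nonneg.2 hpq)]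
    exact key q hq p hp hpq
  · rw [abs_sub_comm (f p), abs_sub_comm p q, abs_of_nonneg (sub_nonneg.2 hpq)]
    exact key p hp q hq hpq

lemma aux_clamp_lip (a b : ℝ) : LipschitzWith 1 (fun s : ℝ => max a (min s b)) := by
  rw [lipschitzWith_iff_dist_le_mul]
  intro p q
  rw [Real.dist_eq, Real.dist_eq, NNReal.coe_one, one_mul]
  calc |max a (min p b) - max a (min q b)| ≤ |min p b - min q b| := by
        rw [max_comm a (min p b), max_comm a (min q b)]
        exact abs_max_sub_max_le_abs _ _ _
    _ ≤ max |p - q| |b - b| := abs_min_sub_min_le_max _ _ _ _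
    _ = |p - q| := by simp


open MeasureTheory Set Filter intervalIntegral
open scoped RealInnerProductSpace Topology

lemma aux_norm_zero (n : ℕ) (h T : ℝ) (hhT : -h ≤ T) (y : ℝ → EuclideanSpace ℝ (Fin n)) :
    unifNorm n h T (fun ξ => y ξ - y ξ) = 0 := by
  have he : (fun ξ : ℝ => ‖y ξ - y ξ‖) = fun _ : ℝ => (0:ℝ) := by funext ξ; simp
  rw [unifNorm, he, Set.Nonempty.image_const (Set.nonempty_Icc.2 hhT), csSup_singleton]

lemma aux_cont {n : ℕ} {h T : ℝ} (hhT : -h ≤ T) {ψ : ℝ → (ℝ → EuclideanSpace ℝ (Fin n)) → ℝ}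
    (hc : ContWrt n (dst n h T) (Dom n h T) ψ) {y : ℝ → EuclideanSpace ℝ (Fin n)}
    (hy : ContinuousOn y (Set.Icc (-h) T)) : ContinuousOn (fun s => ψ s y) (Set.Icc 0 T) := by
  intro s hs
  rw [Metric.continuousWithinAt_iff]
  intro ε hε
  obtain ⟨δ, hδ, hq⟩ := hc (s, y) ⟨hs, hy⟩ ε hε
  refine ⟨δ, hδ, fun s' hs' hd => ?_⟩
  rw [Real.dist_eq]
  apply hq (s', y) ⟨hs', hy⟩
  show |s - s'| + unifNorm n h T (fun ξ => y ξ - y ξ) < δ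
  rw [aux_norm_zero n h T hhT y, add_zero, abs_sub_comm]
  rw [Real.dist_eq] at hd
  exact hd

lemma aux_contG {n : ℕ} {h T : ℝ} (hhT : -h ≤ T)
    {gr : ℝ → (ℝ → EuclideanSpace ℝ (Fin n)) → EuclideanSpace ℝ (Fin n)}
    (hc : ∀ p ∈ Dom n h T, ∀ ε > 0, ∃ δ > 0, ∀ q ∈ Dom n h T,
      dst n h T p q < δ → ‖gr q.1 q.2 - gr p.1 p.2‖ < ε)
    {y : ℝ → EuclideanSpace ℝ (Fin n)}
    (hy : ContinuousOn y (Set.Icc (-h) T)) : ContinuousOn (fun s => gr s y) (Set.Icc 0 T) := by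
  intro s hs
  rw [Metric.continuousWithinAt_iff]
  intro ε hε
  obtain ⟨δ, hδ, hq⟩ := hc (s, y) ⟨hs, hy⟩ ε hε
  refine ⟨δ, hδ, fun s' hs' hd => ?_⟩
  rw [dist_eq_norm]
  apply hq (s', y) ⟨hs', hy⟩
  show |s - s'| + unifNorm n h T (fun ξ => y ξ - y ξ) < δ
  rw [aux_norm_zero n h T hhT y, add_zero, abs_sub_comm]
  rw [Real.dist_eq] at hd
  exact hd

end Aux7
open MeasureTheory Set Filter intervalIntegral
open scoped Topology

theorem stmt7 (n : ℕ) (h T : ℝ) (hh : 0 < h) (hT : 0 < T)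
    (φ pt : ℝ → (ℝ → EuclideanSpace ℝ (Fin n)) → ℝ)
    (gr : ℝ → (ℝ → EuclideanSpace ℝ (Fin n)) → EuclideanSpace ℝ (Fin n))
    (hsm : CiSmooth n h T φ pt gr)
    (t : ℝ) (ht : t ∈ Set.Ico 0 T)
    (x y : ℝ → EuclideanSpace ℝ (Fin n))
    (hx : ContinuousOn x (Set.Icc (-h) T)) (hy : LipExt n h T t x y)
    (τ : ℝ) (hτ : τ ∈ Set.Ico t T) :
    φ τ y = φ t x + (∫ ξ in t..τ, pt ξ y) + ∫ ξ in t..τ, ⟪gr ξ y, deriv y ξ⟫ := by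
  obtain ⟨hycont, hyagree, K, hyK⟩ := hy
  obtain ⟨hφc, hdiff, hptc, hgrc⟩ := hsm
  have hhT : -h ≤ T := by linarith
  have ht0 : 0 ≤ t := ht.1
  have htT : t < T := ht.2
  have hτt : t ≤ τ := hτ.1
  have hτT : τ < T := hτ.2
  have hFc : ContinuousOn (fun s => φ s y) (Set.Icc 0 T) := Aux7.aux_cont hhT hφc hycont
  have hPc : ContinuousOn (fun s => pt s y) (Set.Icc 0 T) := Aux7.aux_cont hhT hptc hycont
  have hGc : ContinuousOn (fun s => gr s y) (Set.Icc 0 T) := Aux7.aux_contG hhT hgrc hycont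
  -- expansions at every intermediate time, taking `y` itself as the extension
  have hexp : ∀ ξ, t ≤ ξ → ξ < T → ∃ o : ℝ → ℝ,
      (∀ σ ∈ Set.Ioc ξ T, φ σ y - φ ξ y = pt ξ y * (σ - ξ) + ⟪gr ξ y, y σ - y ξ⟫ + o (σ - ξ)) ∧
      Filter.Tendsto (fun δ => o δ / δ) (nhdsWithin 0 (Set.Ioi 0)) (nhds 0) := by
    intro ξ hξ1 hξ2
    exact hdiff ξ ⟨ht0.trans hξ1, hξ2⟩ y hycont y
      ⟨hycont, fun _ _ => rfl, K, hyK.mono (Set.Icc_subset_Icc hξ1 le_rfl)⟩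
  -- slope identity near ξ (to the right)
  have hslope_eq : ∀ ξ, ξ < T → ∀ o : ℝ → ℝ,
      (∀ σ ∈ Set.Ioc ξ T, φ σ y - φ ξ y = pt ξ y * (σ - ξ) + ⟪gr ξ y, y σ - y ξ⟫ + o (σ - ξ)) →
      ∀ᶠ σ in 𝓝[>] ξ, slope (fun s => φ s y) ξ σ
        = pt ξ y + ⟪gr ξ y, slope y ξ σ⟫ + o (σ - ξ) / (σ - ξ) := by
    intro ξ hξ2 o ho1
    filter_upwards [Ioc_mem_nhdsGT_of_mem ⟨le_rfl, hξ2⟩, self_mem_nhdsWithin] with σ hσ hσ'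
    have hne : σ - ξ ≠ 0 := ne_of_gt (sub_pos.2 hσ')
    have h1 := ho1 σ hσ
    simp only [slope_def_field, slope_def_module, real_inner_smul_right]
    rw [h1]
    field_simp
  -- bounds for the coefficients
  obtain ⟨Cg, hCg⟩ := (isCompact_Icc (a := t) (b := τ)).exists_bound_of_continuousOn
    (hGc.mono (Set.Icc_subset_Icc ht0 hτT.le))
  have hCg0 : 0 ≤ Cg := le_trans (norm_nonneg _) (hCg t ⟨le_rfl, hτt⟩)
  obtain ⟨Cp, hCp⟩ := (isCompact_Icc (a := t) (b := τ)).exists_bound_of_continuousOn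
    (hPc.mono (Set.Icc_subset_Icc ht0 hτT.le))
  have hC0 : 0 ≤ Cp + Cg * K := by
    have := le_trans (norm_nonneg _) (hCp t ⟨le_rfl, hτt⟩)
    have hK0 : (0:ℝ) ≤ K := K.coe_nonneg
    nlinarith
  have hCb : ∀ ξ ∈ Set.Icc t τ, |pt ξ y| + ‖gr ξ y‖ * K ≤ Cp + Cg * K := by
    intro ξ hξ
    have h1 := hCp ξ hξ
    have h2 := hCg ξ hξ
    rw [Real.norm_eq_abs] at h1
    have hK0 : (0:ℝ) ≤ K := K.coe_nonneg
    nlinarith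
  -- Dini slope bound
  have habs_slope : ∀ ξ ∈ Set.Ico t τ, ∀ r, Cp + Cg * K < r →
      ∀ᶠ σ in 𝓝[>] ξ, |slope (fun s => φ s y) ξ σ| < r := by
    intro ξ hξ r hr
    have hξ1 : t ≤ ξ := hξ.1
    have hξ3 : ξ < T := hξ.2.trans hτT
    obtain ⟨o, ho1, ho2⟩ := hexp ξ hξ1 hξ3
    have hsl := hslope_eq ξ hξ3 o ho1
    have hoε : ∀ᶠ σ in 𝓝[>] ξ, |o (σ - ξ) / (σ - ξ)| < r - (Cp + Cg * K) := by
      have h0 : (0:ℝ) < r - (Cp + Cg * K) := by linarith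
      exact (Metric.tendsto_nhds.1 (ho2.comp (Aux7.aux_shift ξ)) _ h0).mono
        (fun σ hσ => by rw [abs_div]; simpa [Real.dist_eq, abs_div] using hσ)
    filter_upwards [hsl, hoε, Ioc_mem_nhdsGT_of_mem ⟨le_rfl, hξ3⟩, self_mem_nhdsWithin]
      with σ h1 h2 h3 h4
    rw [h1]
    have hσξ : (0:ℝ) < σ - ξ := sub_pos.2 h4
    have hylip : ‖y σ - y ξ‖ ≤ K * (σ - ξ) := by
      have := hyK.dist_le_mul σ ⟨hξ1.trans h4.le, h3.2⟩ ξ ⟨hξ1, hξ3.le⟩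
      rw [dist_eq_norm, Real.dist_eq, abs_of_pos hσξ] at this
      exact this
    have hslopey : |⟪gr ξ y, slope y ξ σ⟫| ≤ ‖gr ξ y‖ * K := by
      calc |⟪gr ξ y, slope y ξ σ⟫| ≤ ‖gr ξ y‖ * ‖slope y ξ σ‖ := abs_real_inner_le_norm _ _
        _ ≤ ‖gr ξ y‖ * K := by
            apply mul_le_mul_of_nonneg_left _ (norm_nonneg _)
            rw [slope_def_module, norm_smul, norm_inv, Real.norm_eq_abs, abs_of_pos hσξ,
              inv_mul_le_iff₀ hσξ]
            linarith
    have hCb' := hCb ξ ⟨hξ1, hξ.2.le⟩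
    calc |pt ξ y + ⟪gr ξ y, slope y ξ σ⟫ + o (σ - ξ) / (σ - ξ)|
        ≤ |pt ξ y| + |⟪gr ξ y, slope y ξ σ⟫| + |o (σ - ξ) / (σ - ξ)| := abs_add_three _ _ _
      _ < r := by linarith
  -- φ(·, y) is Lipschitz on [t, τ]
  have hFlip : LipschitzOnWith (Real.toNNReal (Cp + Cg * K)) (fun s => φ s y) (Set.Icc t τ) :=
    Aux7.aux_dini_lip hτt hC0 (hFc.mono (Set.Icc_subset_Icc ht0 hτT.le)) habs_slope
  -- clamped version
  have hclip := Aux7.aux_clamp_lip t τ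
  have hmaps : Set.MapsTo (fun s : ℝ => max t (min s τ)) Set.univ (Set.Icc t τ) :=
    fun s _ => ⟨le_max_left _ _, max_le hτt (min_le_right _ _)⟩
  have hFclip : LipschitzWith (Real.toNNReal (Cp + Cg * K) * 1)
      ((fun s => φ s y) ∘ (fun s : ℝ => max t (min s τ))) := by
    rw [← lipschitzOnWith_univ]
    exact hFlip.comp hclip.lipschitzOnWith hmaps
  have hftc := Aux7.aux_ftc_lipschitz hFclip hτt
  have hcτ : max t (min τ τ) = τ := by rw [min_self]; exact max_eq_right hτt
  have hct : max t (min t τ) = t := by rw [min_eq_left hτt]; exact max_eq_left le_rfl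
  -- derivative bound for y
  have hyderiv_bd : ∀ ξ ∈ Set.Ioo t T, ‖deriv y ξ‖ ≤ K := by
    intro ξ hξ
    by_cases hd : DifferentiableAt ℝ y ξ
    · exact Aux7.aux_deriv_norm_le hyK hξ hd.hasDerivAt
    · rw [deriv_zero_of_not_differentiableAt hd]; simp
  have hne_ae : ∀ᵐ ξ : ℝ, ξ ≠ τ := by
    rw [ae_iff]
    have he : {ξ : ℝ | ¬ ξ ≠ τ} = {τ} := by ext ξ; simp
    rw [he, Real.volume_singleton]
  -- integrability
  have hintP : IntervalIntegrable (fun ξ => pt ξ y) volume t τ := by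
    apply ContinuousOn.intervalIntegrable
    rw [Set.uIcc_of_le hτt]
    exact hPc.mono (Set.Icc_subset_Icc ht0 hτT.le)
  have hintI : IntervalIntegrable (fun ξ => ⟪gr ξ y, deriv y ξ⟫) volume t τ := by
    rw [intervalIntegrable_iff_integrableOn_Ioc_of_le hτt]
    apply MeasureTheory.Integrable.mono' (g := fun _ : ℝ => Cg * K)
    · exact MeasureTheory.integrableOn_const measure_Ioc_lt_top.ne
    · apply MeasureTheory.AEStronglyMeasurable.inner
      · exact (((hGc.mono (Set.Icc_subset_Icc ht0 hτT.le)).mono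
          Set.Ioc_subset_Icc_self).aestronglyMeasurable measurableSet_Ioc)
      · exact (measurable_deriv y).aestronglyMeasurable.restrict
    · filter_upwards [MeasureTheory.ae_restrict_mem measurableSet_Ioc,
        MeasureTheory.ae_restrict_of_ae hne_ae] with ξ h1 h2
      have hξo : ξ ∈ Set.Ioo t T := ⟨h1.1, (lt_of_le_of_ne h1.2 h2).trans hτT⟩
      rw [Real.norm_eq_abs]
      calc |⟪gr ξ y, deriv y ξ⟫| ≤ ‖gr ξ y‖ * ‖deriv y ξ‖ := abs_real_inner_le_norm _ _
        _ ≤ Cg * K := mul_le_mul (hCg ξ ⟨h1.1.le, h1.2⟩) (hyderiv_bd ξ hξo)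
            (norm_nonneg _) hCg0
  -- a.e. identification of the derivative of the clamped function
  have haeF := hFlip.ae_differentiableWithinAt_of_mem (μ := volume)
  have haey := hyK.ae_differentiableWithinAt_of_mem (μ := volume)
  have hkey : ∀ᵐ ξ : ℝ, ξ ∈ Set.uIoc t τ →
      deriv ((fun s => φ s y) ∘ (fun s : ℝ => max t (min s τ))) ξ
        = pt ξ y + ⟪gr ξ y, deriv y ξ⟫ := by
    filter_upwards [haeF, haey, hne_ae] with ξ h1 h2 h3 hmem
    rw [Set.uIoc_of_le hτt] at hmem
    have hξo : ξ ∈ Set.Ioo t τ := ⟨hmem.1, lt_of_le_of_ne hmem.2 h3⟩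
    have hξT : ξ < T := hξo.2.trans hτT
    have hFd : DifferentiableAt ℝ (fun s => φ s y) ξ :=
      (h1 ⟨hξo.1.le, hξo.2.le⟩).differentiableAt (Icc_mem_nhds hξo.1 hξo.2)
    have hyd : DifferentiableAt ℝ y ξ :=
      (h2 ⟨hξo.1.le, hξT.le⟩).differentiableAt (Icc_mem_nhds hξo.1 hξT)
    have heq : (fun s => φ s y) ∘ (fun s : ℝ => max t (min s τ)) =ᶠ[𝓝 ξ] (fun s => φ s y) := by
      filter_upwards [Ioo_mem_nhds hξo.1 hξo.2] with s hs
      simp only [Function.comp_apply]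
      rw [min_eq_left hs.2.le, max_eq_right hs.1.le]
    rw [heq.deriv_eq]
    obtain ⟨o, ho1, ho2⟩ := hexp ξ hξo.1.le hξT
    have hs1 : Filter.Tendsto (slope (fun s => φ s y) ξ) (𝓝[>] ξ)
        (𝓝 (deriv (fun s => φ s y) ξ)) := Aux7.aux_slope_right hFd.hasDerivAt
    have hsy : Filter.Tendsto (slope y ξ) (𝓝[>] ξ) (𝓝 (deriv y ξ)) :=
      Aux7.aux_slope_right hyd.hasDerivAt
    have hinner : Filter.Tendsto (fun σ => ⟪gr ξ y, slope y ξ σ⟫) (𝓝[>] ξ)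
        (𝓝 ⟪gr ξ y, deriv y ξ⟫) :=
      ((continuous_const.inner continuous_id).tendsto (deriv y ξ)).comp hsy
    have hO : Filter.Tendsto (fun σ => o (σ - ξ) / (σ - ξ)) (𝓝[>] ξ) (𝓝 0) :=
      ho2.comp (Aux7.aux_shift ξ)
    have hs2 : Filter.Tendsto (slope (fun s => φ s y) ξ) (𝓝[>] ξ)
        (𝓝 (pt ξ y + ⟪gr ξ y, deriv y ξ⟫)) := by
      have hcomb := (tendsto_const_nhds (x := pt ξ y) (f := 𝓝[>] ξ)).add hinner |>.add hO
      rw [add_zero] at hcomb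
      exact hcomb.congr' ((hslope_eq ξ hξT o ho1).mono (fun σ hσ => hσ.symm))
    exact tendsto_nhds_unique hs1 hs2
  -- φ t x = φ t y
  have hbase : φ t x = φ t y := by
    obtain ⟨o1, ho11, ho12⟩ := hdiff t ht x hx y ⟨hycont, hyagree, K, hyK⟩
    obtain ⟨o2, ho21, ho22⟩ := hexp t le_rfl htT
    have hyt : Filter.Tendsto y (𝓝[>] t) (𝓝 (y t)) := by
      have hcw : ContinuousWithinAt y (Set.Icc (-h) T) t := hycont t ⟨by linarith, htT.le⟩
      have h1 : Filter.Tendsto y (𝓝[Set.Ioc t T] t) (𝓝 (y t)) :=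
        hcw.mono (fun z hz => ⟨le_trans (by linarith) hz.1.le, hz.2⟩)
      exact h1.mono_left (nhdsWithin_le_of_mem (Ioc_mem_nhdsGT_of_mem ⟨le_rfl, htT⟩))
    have hxt : y t = x t := hyagree t ⟨by linarith, le_rfl⟩
    have hshift0 : Filter.Tendsto (fun σ : ℝ => σ - t) (𝓝[>] t) (𝓝 0) :=
      (Aux7.aux_shift t).mono_right nhdsWithin_le_nhds
    have t1 : Filter.Tendsto (fun σ => pt t x * (σ - t)) (𝓝[>] t) (𝓝 0) := by
      have := (tendsto_const_nhds (x := pt t x) (f := 𝓝[>] t)).mul hshift0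
      rwa [mul_zero] at this
    have t2 : Filter.Tendsto (fun σ => ⟪gr t x, y σ - x t⟫) (𝓝[>] t) (𝓝 0) := by
      have hv : Filter.Tendsto (fun σ => y σ - x t) (𝓝[>] t) (𝓝 (y t - x t)) :=
        hyt.sub_const _
      rw [hxt, sub_self] at hv
      have hci : Continuous fun v : EuclideanSpace ℝ (Fin n) => ⟪gr t x, v⟫ :=
        continuous_const.inner continuous_id
      have := (hci.tendsto (0 : EuclideanSpace ℝ (Fin n))).comp hv
      simpa [Function.comp_def] using this
    have t3 : Filter.Tendsto (fun σ => o1 (σ - t)) (𝓝[>] t) (𝓝 0) := Aux7.aux_o ho12 t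
    have t4 : Filter.Tendsto (fun σ => pt t y * (σ - t)) (𝓝[>] t) (𝓝 0) := by
      have := (tendsto_const_nhds (x := pt t y) (f := 𝓝[>] t)).mul hshift0
      rwa [mul_zero] at this
    have t5 : Filter.Tendsto (fun σ => ⟪gr t y, y σ - y t⟫) (𝓝[>] t) (𝓝 0) := by
      have hv : Filter.Tendsto (fun σ => y σ - y t) (𝓝[>] t) (𝓝 (y t - y t)) :=
        hyt.sub_const _
      rw [sub_self] at hv
      have hci : Continuous fun v : EuclideanSpace ℝ (Fin n) => ⟪gr t y, v⟫ :=
        continuous_const.inner continuous_id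
      have := (hci.tendsto (0 : EuclideanSpace ℝ (Fin n))).comp hv
      simpa [Function.comp_def] using this
    have t6 : Filter.Tendsto (fun σ => o2 (σ - t)) (𝓝[>] t) (𝓝 0) := Aux7.aux_o ho22 t
    have hR : Filter.Tendsto (fun σ =>
        (pt t x * (σ - t) + ⟪gr t x, y σ - x t⟫ + o1 (σ - t))
        - (pt t y * (σ - t) + ⟪gr t y, y σ - y t⟫ + o2 (σ - t))) (𝓝[>] t) (𝓝 0) := by
      have := ((t1.add t2).add t3).sub ((t4.add t5).add t6)
      simpa using this
    have hconst : ∀ᶠ σ in 𝓝[>] t,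
        (pt t x * (σ - t) + ⟪gr t x, y σ - x t⟫ + o1 (σ - t))
        - (pt t y * (σ - t) + ⟪gr t y, y σ - y t⟫ + o2 (σ - t)) = φ t y - φ t x := by
      filter_upwards [Ioc_mem_nhdsGT_of_mem ⟨le_rfl, htT⟩] with σ hσ
      have e1 := ho11 σ hσ
      have e2 := ho21 σ hσ
      linarith
    have hlim : Filter.Tendsto (fun _ : ℝ => φ t y - φ t x) (𝓝[>] t) (𝓝 0) :=
      hR.congr' hconst
    have h0 : φ t y - φ t x = 0 := tendsto_nhds_unique tendsto_const_nhds hlim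
    linarith
  -- assemble
  have hIeq : (∫ ξ in t..τ, (pt ξ y + ⟪gr ξ y, deriv y ξ⟫)) = φ τ y - φ t y := by
    have hcongr := intervalIntegral.integral_congr_ae (μ := volume)
      (hkey.mono (fun ξ hξ hmem => (hξ hmem)))
    rw [hcongr] at hftc
    rw [hftc]
    simp only [Function.comp_apply]
    rw [hcτ, hct]
  rw [intervalIntegral.integral_add hintP hintI] at hIeq
  linarith
end
end

section
/- The functional V(t, x(·)) satisfies the ci-differentiability property with ∂_t V(t, x(·)) = 0 and ∇V(t, x(·)) as given: for every (t, x(·)) ∈ [0,T) × C([−h,T], ℝⁿ) with max_{τ∈[−h,t]}‖x(τ)‖ > 0 and every Lipschitz extension y(·) ∈ Lip(t, x(·)), one has V(τ, y(·)) − V(t, x(·)) = ⟨∇V(t, x(·)), y(τ) − x(t)⟩ + o(τ − t) as τ ↓ t, where ∇V(t, x(·)) = (2 − 4(M² − ‖x(t)‖²)/M²)·x(t) with M = max_{τ∈[−h,t]}‖x(τ)‖. -/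
noncomputable section

open scoped RealInnerProductSpace

/-- The candidate gradient `∇V`. -/
def gradV (n : ℕ) (h t : ℝ) (x : ℝ → EuclideanSpace ℝ (Fin n)) :
    EuclideanSpace ℝ (Fin n) :=
  if 0 < runMax n h t x then
    (2 - 4 * ((runMax n h t x) ^ 2 - ‖x t‖ ^ 2) / (runMax n h t x) ^ 2) • x t
  else 0

set_option maxHeartbeats 2000000 in
theorem stmt9 (n : ℕ) (h T : ℝ) (hh : 0 < h) (hT : 0 < T)
    (t : ℝ) (ht : t ∈ Set.Ico 0 T)
    (x : ℝ → EuclideanSpace ℝ (Fin n)) (hx : ContinuousOn x (Set.Icc (-h) T))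
    (hM : 0 < runMax n h t x)
    (y : ℝ → EuclideanSpace ℝ (Fin n)) (hy : LipExt n h T t x y) :
    ∃ o : ℝ → ℝ,
      (∀ τ ∈ Set.Ioc t T,
        Vfun n h τ y - Vfun n h t x = ⟪gradV n h t x, y τ - x t⟫ + o (τ - t)) ∧
      Filter.Tendsto (fun δ => o δ / δ) (nhdsWithin 0 (Set.Ioi 0)) (nhds 0) := by
  obtain ⟨hycont, hyeq, K, hK⟩ := hy
  have hht : -h ≤ t := le_trans (by linarith) ht.1
  have htT : t ≤ T := le_of_lt ht.2
  have hKnn : (0:ℝ) ≤ K := K.coe_nonneg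
  set a : EuclideanSpace ℝ (Fin n) := x t with ha
  set M : ℝ := runMax n h t x with hMdef
  clear_value a M
  have hMpos : 0 < M := hM
  have hyt : y t = a := (hyeq t ⟨hht, le_rfl⟩).trans ha.symm
  have hMy : runMax n h t y = M := by
    rw [hMdef, runMax, runMax]
    congr 1
    exact Set.image_congr fun τ hτ => by rw [hyeq τ hτ]
  have hbdd : BddAbove ((fun s => ‖y s‖) '' Set.Icc (-h) T) :=
    (isCompact_Icc.image_of_continuousOn hycont.norm).bddAbove
  have hbddt : ∀ t' : ℝ, t' ≤ T → BddAbove ((fun s => ‖y s‖) '' Set.Icc (-h) t') :=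
    fun t' h' => hbdd.mono (Set.image_mono (Set.Icc_subset_Icc le_rfl h'))
  have hanorm : ‖a‖ ≤ M := by
    rw [← hMy, runMax]
    refine le_trans (le_of_eq ?_) (le_csSup (hbddt t htT) ⟨t, ⟨hht, le_rfl⟩, rfl⟩)
    show ‖a‖ = ‖y t‖
    rw [hyt]
  refine ⟨fun δ => Vfun n h (t + δ) y - Vfun n h t x - ⟪gradV n h t x, y (t + δ) - a⟫,
    fun τ hτ => ?_, ?_⟩
  · have h1 : t + (τ - t) = τ := by ring
    simp only [h1]
    ring
  -- facts about the running maximum for small δ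
  have facts : ∀ δ : ℝ, 0 < δ → δ ≤ T - t →
      M ≤ runMax n h (t + δ) y ∧
      runMax n h (t + δ) y ≤ max M (‖a‖ + K * δ) ∧
      ‖y (t + δ)‖ ≤ runMax n h (t + δ) y ∧
      ‖y (t + δ) - a‖ ≤ K * δ := by
    intro δ hδ hδT
    have hτT : t + δ ≤ T := by linarith
    have hbτ : BddAbove ((fun s => ‖y s‖) '' Set.Icc (-h) (t + δ)) := hbddt _ hτT
    have hne : (Set.Icc (-h) (t + δ)).Nonempty := Set.nonempty_Icc.2 (by linarith)
    refine ⟨?_, ?_, ?_, ?_⟩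
    · rw [← hMy, runMax, runMax]
      exact csSup_le_csSup hbτ
        ((Set.nonempty_Icc.2 (by linarith)).image _)
        (Set.image_mono (Set.Icc_subset_Icc le_rfl (by linarith)))
    · rw [runMax]
      refine csSup_le (hne.image _) ?_
      rintro _ ⟨τ', hτ', rfl⟩
      rcases le_or_gt τ' t with hle | hgt
      · refine le_max_of_le_left ?_
        rw [← hMy, runMax]
        exact le_csSup (hbddt t htT) ⟨τ', ⟨hτ'.1, hle⟩, rfl⟩
      · refine le_max_of_le_right ?_
        have hd : dist (y τ') (y t) ≤ K * dist τ' t :=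
          hK.dist_le_mul τ' ⟨hgt.le, le_trans hτ'.2 hτT⟩ t ⟨le_rfl, htT⟩
        have hdist : dist τ' t ≤ δ := by
          rw [Real.dist_eq, abs_of_nonneg (by linarith)]
          linarith [hτ'.2]
        have hyn : ‖y τ'‖ ≤ ‖y t‖ + dist (y τ') (y t) := by
          rw [dist_eq_norm]
          have := norm_add_le (y t) (y τ' - y t)
          simpa using this
        rw [hyt] at hyn hd
        have hKd : (K : ℝ) * dist τ' t ≤ K * δ := mul_le_mul_of_nonneg_left hdist hKnn
        show ‖y τ'‖ ≤ ‖a‖ + ↑K * δ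
        linarith
    · rw [runMax]
      exact le_csSup hbτ ⟨t + δ, ⟨by linarith, le_rfl⟩, rfl⟩
    · rw [← hyt, ← dist_eq_norm]
      have hd : dist (y (t + δ)) (y t) ≤ K * dist (t + δ) t :=
        hK.dist_le_mul (t + δ) ⟨by linarith, hτT⟩ t ⟨le_rfl, htT⟩
      have : dist (t + δ) t = δ := by
        rw [Real.dist_eq]
        simp [abs_of_nonneg hδ.le]
      rw [this] at hd
      exact hd
  -- key quantitative bound
  have key : ∃ C δ₀ : ℝ, 0 ≤ C ∧ 0 < δ₀ ∧ ∀ δ : ℝ, 0 < δ → δ < δ₀ →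
      |Vfun n h (t + δ) y - Vfun n h t x - ⟪gradV n h t x, y (t + δ) - a⟫| ≤ C * δ ^ 2 := by
    rcases eq_or_lt_of_le hanorm with heq | hlt
    · -- boundary case ‖a‖ = M
      refine ⟨16 * K ^ 2 * (M + K) ^ 2 / M ^ 2 + K ^ 2, min (T - t) 1, by positivity,
        lt_min (by linarith [ht.2]) one_pos, ?_⟩
      intro δ hδ hδlt
      obtain ⟨hM1, hM2, hN, he⟩ := facts δ hδ (le_of_lt (lt_of_lt_of_le hδlt (min_le_left _ _)))
      have hδ1 : δ ≤ 1 := le_of_lt (lt_of_lt_of_le hδlt (min_le_right _ _))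
      set Mτ : ℝ := runMax n h (t + δ) y with hMτdef
      set N : ℝ := ‖y (t + δ)‖ with hNdef
      set e : EuclideanSpace ℝ (Fin n) := y (t + δ) - a with he'
      clear_value Mτ N e
      have hM2' : Mτ ≤ M + K * δ := by
        rw [← heq] at hM2 ⊢
        exact le_trans hM2 (max_le (by nlinarith) le_rfl)
      have hMτpos : 0 < Mτ := lt_of_lt_of_le hMpos hM1
      have hNsq : N ^ 2 = ‖a‖ ^ 2 + 2 * ⟪a, e⟫ + ‖e‖ ^ 2 := by
        rw [hNdef, show y (t + δ) = a + e by rw [he']; abel]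
        exact norm_add_sq_real a e
      have hEe : ‖e‖ ^ 2 ≤ K ^ 2 * δ ^ 2 := by
        have := pow_le_pow_left₀ (norm_nonneg e) he 2
        calc ‖e‖ ^ 2 ≤ (K * δ) ^ 2 := this
          _ = K ^ 2 * δ ^ 2 := by ring
      have hoδ : Vfun n h (t + δ) y - Vfun n h t x - ⟪gradV n h t x, y (t + δ) - a⟫
          = (Mτ ^ 2 - N ^ 2) ^ 2 / Mτ ^ 2 + ‖e‖ ^ 2 := by
        rw [Vfun, Vfun, gradV, ← ha, ← hMdef, ← hMτdef, ← hNdef, ← he',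
          if_pos hMτpos, if_pos hMpos, if_pos hMpos, heq, real_inner_smul_left, hNsq, heq]
        have hMne : M ≠ 0 := ne_of_gt hMpos
        field_simp
        ring
      rw [he', hoδ]
      have hNge : M - K * δ ≤ N := by
        have hna : ‖a‖ ≤ ‖a + e‖ + ‖e‖ := by
          have := norm_add_le (a + e) (-e)
          simpa using this
        have hae : N = ‖a + e‖ := by
          rw [hNdef, show y (t + δ) = a + e by rw [he']; abel]
        rw [← heq, hae]
        linarith
      have hNnn : (0:ℝ) ≤ N := by rw [hNdef]; exact norm_nonneg _
      have hKδ : (K : ℝ) * δ ≤ K := mul_le_of_le_one_right hKnn hδ1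
      have ha0 : 0 ≤ Mτ - N := by linarith
      have ha1 : Mτ - N ≤ 2 * K * δ := by linarith
      have ha2 : Mτ + N ≤ 2 * (M + K) := by linarith
      have ha3 : (0:ℝ) ≤ Mτ + N := by linarith
      have h5' : (Mτ - N) * (Mτ + N) ≤ 2 * K * δ * (2 * (M + K)) :=
        mul_le_mul ha1 ha2 ha3 (by positivity)
      have h6 : 0 ≤ (Mτ - N) * (Mτ + N) := mul_nonneg ha0 ha3
      have h7 : (Mτ ^ 2 - N ^ 2) ^ 2 ≤ 16 * K ^ 2 * (M + K) ^ 2 * δ ^ 2 := by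
        have hfac : Mτ ^ 2 - N ^ 2 = (Mτ - N) * (Mτ + N) := by ring
        rw [hfac]
        calc ((Mτ - N) * (Mτ + N)) ^ 2 ≤ (2 * K * δ * (2 * (M + K))) ^ 2 :=
              pow_le_pow_left₀ h6 h5' 2
          _ = 16 * K ^ 2 * (M + K) ^ 2 * δ ^ 2 := by ring
      have h8 : (Mτ ^ 2 - N ^ 2) ^ 2 / Mτ ^ 2 ≤ 16 * K ^ 2 * (M + K) ^ 2 * δ ^ 2 / M ^ 2 := by
        refine div_le_div₀ (by positivity) h7 (by positivity) ?_
        exact pow_le_pow_left₀ hMpos.le hM1 2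
      have habs : |(Mτ ^ 2 - N ^ 2) ^ 2 / Mτ ^ 2 + ‖e‖ ^ 2| =
          (Mτ ^ 2 - N ^ 2) ^ 2 / Mτ ^ 2 + ‖e‖ ^ 2 := abs_of_nonneg (by positivity)
      rw [habs]
      have : (16 * K ^ 2 * (M + K) ^ 2 / M ^ 2 + K ^ 2) * δ ^ 2
          = 16 * K ^ 2 * (M + K) ^ 2 * δ ^ 2 / M ^ 2 + K ^ 2 * δ ^ 2 := by ring
      rw [this]
      linarith
    · -- interior case ‖a‖ < M
      refine ⟨K ^ 2 + (2 * M * K + K ^ 2) ^ 2 / M ^ 2,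
        min (T - t) (min 1 ((M - ‖a‖) / (K + 1))), by positivity,
        lt_min (by linarith [ht.2]) (lt_min one_pos (div_pos (by linarith) (by positivity))), ?_⟩
      intro δ hδ hδlt
      obtain ⟨hM1, hM2, hN, he⟩ := facts δ hδ (le_of_lt (lt_of_lt_of_le hδlt (min_le_left _ _)))
      have hδ1 : δ ≤ 1 :=
        le_of_lt (lt_of_lt_of_le hδlt (le_trans (min_le_right _ _) (min_le_left _ _)))
      have hδ2 : δ ≤ (M - ‖a‖) / (K + 1) :=
        le_of_lt (lt_of_lt_of_le hδlt (le_trans (min_le_right _ _) (min_le_right _ _)))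
      have haK : ‖a‖ + K * δ ≤ M := by
        have h9 : δ * (K + 1) ≤ M - ‖a‖ := by
          rw [← le_div_iff₀ (by positivity : (0:ℝ) < K + 1)]
          exact hδ2
        nlinarith
      have hMτeq : runMax n h (t + δ) y = M := by
        refine le_antisymm ?_ hM1
        exact le_trans hM2 (max_le le_rfl haK)
      set N : ℝ := ‖y (t + δ)‖ with hNdef
      set e : EuclideanSpace ℝ (Fin n) := y (t + δ) - a with he'
      clear_value N e
      have hNsq : N ^ 2 = ‖a‖ ^ 2 + 2 * ⟪a, e⟫ + ‖e‖ ^ 2 := by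
        rw [hNdef, show y (t + δ) = a + e by rw [he']; abel]
        exact norm_add_sq_real a e
      have hoδ : Vfun n h (t + δ) y - Vfun n h t x - ⟪gradV n h t x, y (t + δ) - a⟫
          = (1 - 2 * (M ^ 2 - ‖a‖ ^ 2) / M ^ 2) * ‖e‖ ^ 2
            + (2 * ⟪a, e⟫ + ‖e‖ ^ 2) ^ 2 / M ^ 2 := by
        rw [Vfun, Vfun, gradV, hMτeq, ← ha, ← hMdef, ← hNdef, ← he',
          if_pos hMpos, if_pos hMpos, if_pos hMpos, real_inner_smul_left, hNsq]
        have hMne : M ≠ 0 := ne_of_gt hMpos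
        field_simp
        ring
      rw [he', hoδ]
      have hEe : ‖e‖ ^ 2 ≤ K ^ 2 * δ ^ 2 := by
        have := pow_le_pow_left₀ (norm_nonneg e) he 2
        calc ‖e‖ ^ 2 ≤ (K * δ) ^ 2 := this
          _ = K ^ 2 * δ ^ 2 := by ring
      have hi : |⟪a, e⟫| ≤ M * (K * δ) := by
        refine le_trans (abs_real_inner_le_norm a e) ?_
        exact mul_le_mul hanorm he (norm_nonneg e) hMpos.le
      have hcoef : |1 - 2 * (M ^ 2 - ‖a‖ ^ 2) / M ^ 2| ≤ 1 := by
        have hs1 : ‖a‖ ^ 2 ≤ M ^ 2 := pow_le_pow_left₀ (norm_nonneg a) hanorm 2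
        have hr0 : 0 ≤ (M ^ 2 - ‖a‖ ^ 2) / M ^ 2 := div_nonneg (by linarith) (by positivity)
        have hr1 : (M ^ 2 - ‖a‖ ^ 2) / M ^ 2 ≤ 1 := by
          rw [div_le_one (by positivity)]
          have := sq_nonneg ‖a‖
          nlinarith
        have hx2 : 2 * (M ^ 2 - ‖a‖ ^ 2) / M ^ 2 = 2 * ((M ^ 2 - ‖a‖ ^ 2) / M ^ 2) := by ring
        rw [hx2, abs_le]
        constructor <;> linarith
      have hd : |2 * ⟪a, e⟫ + ‖e‖ ^ 2| ≤ (2 * M * K + K ^ 2) * δ := by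
        have h1 : |2 * ⟪a, e⟫ + ‖e‖ ^ 2| ≤ 2 * |⟪a, e⟫| + ‖e‖ ^ 2 := by
          refine le_trans (abs_add_le _ _) ?_
          rw [abs_mul, abs_two, abs_of_nonneg (by positivity : (0:ℝ) ≤ ‖e‖ ^ 2)]
        have h2 : ‖e‖ ^ 2 ≤ K ^ 2 * δ := by nlinarith
        nlinarith
      have hd2 : (2 * ⟪a, e⟫ + ‖e‖ ^ 2) ^ 2 ≤ (2 * M * K + K ^ 2) ^ 2 * δ ^ 2 := by
        have h0 : (0:ℝ) ≤ (2 * M * K + K ^ 2) * δ := by positivity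
        have := pow_le_pow_left₀ (abs_nonneg (2 * ⟪a, e⟫ + ‖e‖ ^ 2)) hd 2
        rw [sq_abs] at this
        calc (2 * ⟪a, e⟫ + ‖e‖ ^ 2) ^ 2 ≤ ((2 * M * K + K ^ 2) * δ) ^ 2 := this
          _ = (2 * M * K + K ^ 2) ^ 2 * δ ^ 2 := by ring
      have hd3 : (2 * ⟪a, e⟫ + ‖e‖ ^ 2) ^ 2 / M ^ 2 ≤ (2 * M * K + K ^ 2) ^ 2 * δ ^ 2 / M ^ 2 :=
        (div_le_div_iff_of_pos_right (by positivity)).2 hd2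
      have h1 : |(1 - 2 * (M ^ 2 - ‖a‖ ^ 2) / M ^ 2) * ‖e‖ ^ 2| ≤ K ^ 2 * δ ^ 2 := by
        rw [abs_mul, abs_of_nonneg (by positivity : (0:ℝ) ≤ ‖e‖ ^ 2)]
        nlinarith [abs_nonneg (1 - 2 * (M ^ 2 - ‖a‖ ^ 2) / M ^ 2), sq_nonneg ‖e‖]
      have h2 : |(2 * ⟪a, e⟫ + ‖e‖ ^ 2) ^ 2 / M ^ 2| = (2 * ⟪a, e⟫ + ‖e‖ ^ 2) ^ 2 / M ^ 2 :=
        abs_of_nonneg (by positivity)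
      have := abs_add_le ((1 - 2 * (M ^ 2 - ‖a‖ ^ 2) / M ^ 2) * ‖e‖ ^ 2)
        ((2 * ⟪a, e⟫ + ‖e‖ ^ 2) ^ 2 / M ^ 2)
      rw [h2] at this
      have hfin : (K ^ 2 + (2 * M * K + K ^ 2) ^ 2 / M ^ 2) * δ ^ 2
          = K ^ 2 * δ ^ 2 + (2 * M * K + K ^ 2) ^ 2 * δ ^ 2 / M ^ 2 := by ring
      rw [hfin]
      linarith
  -- conclude the limit from the quantitative bound
  obtain ⟨C, δ₀, hC, hδ₀, hkey⟩ := key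
  apply squeeze_zero_norm' (a := fun δ => C * δ)
  · filter_upwards [Ioo_mem_nhdsGT_of_mem (Set.mem_Ico.2 ⟨le_rfl, hδ₀⟩)] with δ hδ
    have hδp : 0 < δ := hδ.1
    rw [Real.norm_eq_abs, abs_div, abs_of_pos hδp, div_le_iff₀ hδp]
    calc |Vfun n h (t + δ) y - Vfun n h t x - ⟪gradV n h t x, y (t + δ) - a⟫|
        ≤ C * δ ^ 2 := hkey δ hδp hδ.2
      _ = C * δ * δ := by ring
  · have h1 : Filter.Tendsto (fun δ : ℝ => C * δ) (nhds 0) (nhds (C * 0)) :=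
      (Filter.tendsto_id (x := nhds (0:ℝ))).const_mul C
    rw [mul_zero] at h1
    exact h1.mono_left nhdsWithin_le_nhds
end
end

section
/- The Hamiltonian H(t, x(·), s) = ⟨s, x(t − h)⟩ satisfies condition (B.3) (Lipschitz continuity in the path variable in the uniform norm with factor λ(1 + ‖s‖)) but does not satisfy condition (B.4): there is no λ > 0 such that |H(t,x(·),s) − H(t,y(·),s)| ≤ λ(1+‖s‖)(‖x(t)−y(t)‖ + √(∫_{−h}^t ‖x(τ)−y(τ)‖² dτ)) for all t ∈ [0,T], x, y in a given compact set containing suitable paths, and all s ∈ ℝⁿ. -/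
open scoped RealInnerProductSpace

theorem stmt12 (n : ℕ) (hn : 0 < n) (h T : ℝ) (hh : 0 < h) (hT : 0 < T) :
    (∃ lam > (0 : ℝ), ∀ t ∈ Set.Icc (0 : ℝ) T,
      ∀ x y : ℝ → EuclideanSpace ℝ (Fin n),
        ContinuousOn x (Set.Icc (-h) T) → ContinuousOn y (Set.Icc (-h) T) →
        ∀ s : EuclideanSpace ℝ (Fin n),
          |⟪s, x (t - h)⟫ - ⟪s, y (t - h)⟫| ≤
            lam * (1 + ‖s‖) * sSup ((fun τ => ‖x τ - y τ‖) '' Set.Icc (-h) t)) ∧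
    ¬ ∃ lam > (0 : ℝ), ∀ t ∈ Set.Icc (0 : ℝ) T,
      ∀ x y : ℝ → EuclideanSpace ℝ (Fin n),
        ContinuousOn x (Set.Icc (-h) T) → ContinuousOn y (Set.Icc (-h) T) →
        ∀ s : EuclideanSpace ℝ (Fin n),
          |⟪s, x (t - h)⟫ - ⟪s, y (t - h)⟫| ≤
            lam * (1 + ‖s‖) *
              (‖x t - y t‖ + Real.sqrt (∫ τ in (-h)..t, ‖x τ - y τ‖ ^ 2)) := by
  constructor
  · refine ⟨1, one_pos, ?_⟩
    intro t ht x y hx hy s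
    have hsub : Set.Icc (-h) t ⊆ Set.Icc (-h) T :=
      Set.Icc_subset_Icc le_rfl ht.2
    have hmem : t - h ∈ Set.Icc (-h) t :=
      ⟨by linarith [ht.1], by linarith⟩
    have hcont : ContinuousOn (fun τ => ‖x τ - y τ‖) (Set.Icc (-h) t) :=
      ((hx.mono hsub).sub (hy.mono hsub)).norm
    have hbdd : BddAbove ((fun τ => ‖x τ - y τ‖) '' Set.Icc (-h) t) :=
      (isCompact_Icc.image_of_continuousOn hcont).bddAbove
    have hle : ‖x (t - h) - y (t - h)‖ ≤
        sSup ((fun τ => ‖x τ - y τ‖) '' Set.Icc (-h) t) :=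
      le_csSup hbdd ⟨t - h, hmem, rfl⟩
    have hM : (0 : ℝ) ≤ sSup ((fun τ => ‖x τ - y τ‖) '' Set.Icc (-h) t) :=
      le_trans (norm_nonneg _) hle
    have h1 : |⟪s, x (t - h)⟫ - ⟪s, y (t - h)⟫| ≤ ‖s‖ * ‖x (t - h) - y (t - h)‖ := by
      rw [← inner_sub_right]
      exact abs_real_inner_le_norm s _
    calc |⟪s, x (t - h)⟫ - ⟪s, y (t - h)⟫|
        ≤ ‖s‖ * ‖x (t - h) - y (t - h)‖ := h1
      _ ≤ (1 + ‖s‖) * sSup ((fun τ => ‖x τ - y τ‖) '' Set.Icc (-h) t) := by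
          have hs : (0 : ℝ) ≤ ‖s‖ := norm_nonneg _
          nlinarith [norm_nonneg (x (t - h) - y (t - h))]
      _ = 1 * (1 + ‖s‖) * sSup ((fun τ => ‖x τ - y τ‖) '' Set.Icc (-h) t) := by ring
  · rintro ⟨lam, hlam, hb⟩
    set ε : ℝ := min h (1 / (4 * lam ^ 2 + 1)) with hεdef
    have hden : (0 : ℝ) < 4 * lam ^ 2 + 1 := by positivity
    have hε : 0 < ε := lt_min hh (by positivity)
    have hεh : ε ≤ h := min_le_left _ _
    have hε1 : ε ≤ 1 / (4 * lam ^ 2 + 1) := min_le_right _ _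
    -- bump function
    set f : ℝ → ℝ := fun τ => max 0 (1 - (τ + h) / ε) with hfdef
    have hfc : Continuous f := by
      apply continuous_const.max
      fun_prop
    have hf0 : f (-h) = 1 := by
      simp [hfdef]
    have hfzero : ∀ τ, -h + ε ≤ τ → f τ = 0 := by
      intro τ hτ
      have : 1 - (τ + h) / ε ≤ 0 := by
        rw [sub_nonpos, le_div_iff₀ hε]
        linarith
      simp [hfdef, max_eq_left this]
    have hfnn : ∀ τ, 0 ≤ f τ := fun τ => le_max_left _ _
    have hfle1 : ∀ τ, -h ≤ τ → f τ ≤ 1 := by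
      intro τ hτ
      have : 1 - (τ + h) / ε ≤ 1 := by
        have : 0 ≤ (τ + h) / ε := div_nonneg (by linarith) hε.le
        linarith
      exact max_le (by norm_num) this
    -- the unit vector and paths
    set e : EuclideanSpace ℝ (Fin n) := EuclideanSpace.single ⟨0, hn⟩ 1 with hedef
    have hne : ‖e‖ = 1 := by simp [hedef]
    set x : ℝ → EuclideanSpace ℝ (Fin n) := fun _ => 0 with hxdef
    set y : ℝ → EuclideanSpace ℝ (Fin n) := fun τ => f τ • e with hydef
    have hxc : ContinuousOn x (Set.Icc (-h) T) := continuousOn_const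
    have hyc : ContinuousOn y (Set.Icc (-h) T) := (hfc.smul continuous_const).continuousOn
    have ht0 : (0 : ℝ) ∈ Set.Icc (0 : ℝ) T := ⟨le_rfl, hT.le⟩
    have hkey := hb 0 ht0 x y hxc hyc e
    rw [zero_sub] at hkey
    -- LHS = 1
    have hinner : ⟪e, x (-h)⟫ - ⟪e, y (-h)⟫ = -1 := by
      have h1 : ⟪e, x (-h)⟫ = (0 : ℝ) := by simp [hxdef]
      have h2 : ⟪e, y (-h)⟫ = (1 : ℝ) := by
        rw [hydef]
        simp only [real_inner_smul_right, hf0, one_mul]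
        rw [real_inner_self_eq_norm_sq, hne]
        norm_num
      rw [h1, h2]; norm_num
    rw [hinner] at hkey
    have hx0y0 : ‖x 0 - y 0‖ = 0 := by
      have : f 0 = 0 := hfzero 0 (by linarith)
      simp [hxdef, hydef, this]
    rw [hx0y0, hne] at hkey
    -- bound the integral
    have hnorm : ∀ τ, ‖x τ - y τ‖ ^ 2 = f τ ^ 2 := by
      intro τ
      rw [hxdef, hydef]
      simp only [zero_sub, norm_neg, norm_smul, hne, mul_one, Real.norm_eq_abs,
        abs_of_nonneg (hfnn τ), sq_abs]
    have hieq : (∫ τ in (-h)..(0:ℝ), ‖x τ - y τ‖ ^ 2) = ∫ τ in (-h)..(0:ℝ), f τ ^ 2 := by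
      apply intervalIntegral.integral_congr
      intro τ _
      exact hnorm τ
    have hmid : -h + ε ≤ 0 := by linarith
    have hint1 : IntervalIntegrable (fun τ => f τ ^ 2) MeasureTheory.volume (-h) (-h + ε) :=
      (hfc.pow 2).intervalIntegrable _ _
    have hint2 : IntervalIntegrable (fun τ => f τ ^ 2) MeasureTheory.volume (-h + ε) 0 :=
      (hfc.pow 2).intervalIntegrable _ _
    have hsplit : (∫ τ in (-h)..(0:ℝ), f τ ^ 2) =
        (∫ τ in (-h)..(-h + ε), f τ ^ 2) + ∫ τ in (-h + ε)..(0:ℝ), f τ ^ 2 :=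
      (intervalIntegral.integral_add_adjacent_intervals hint1 hint2).symm
    have hI2 : (∫ τ in (-h + ε)..(0:ℝ), f τ ^ 2) = 0 := by
      rw [intervalIntegral.integral_congr (g := fun _ => (0 : ℝ))]
      · simp
      · intro τ hτ
        rw [Set.uIcc_of_le hmid] at hτ
        simp [hfzero τ hτ.1]
    have hI1 : (∫ τ in (-h)..(-h + ε), f τ ^ 2) ≤ ε := by
      have : (∫ τ in (-h)..(-h + ε), f τ ^ 2) ≤ ∫ _ in (-h)..(-h + ε), (1 : ℝ) := by
        apply intervalIntegral.integral_mono_on (by linarith) hint1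
          (intervalIntegrable_const)
        intro τ hτ
        have h1 := hfle1 τ hτ.1
        have h2 := hfnn τ
        nlinarith
      simpa using this
    have hInn : 0 ≤ (∫ τ in (-h)..(0:ℝ), f τ ^ 2) := by
      apply intervalIntegral.integral_nonneg (by linarith)
      intro τ _
      positivity
    have hIle : (∫ τ in (-h)..(0:ℝ), f τ ^ 2) ≤ ε := by
      rw [hsplit, hI2, add_zero]
      exact hI1
    have hsqrt : Real.sqrt (∫ τ in (-h)..(0:ℝ), ‖x τ - y τ‖ ^ 2) ≤ Real.sqrt ε := by
      rw [hieq]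
      exact Real.sqrt_le_sqrt hIle
    -- now derive contradiction
    have hfinal : |(-1 : ℝ)| ≤ lam * (1 + 1) * (0 + Real.sqrt ε) := by
      refine le_trans hkey ?_
      have : (0 : ℝ) ≤ lam * (1 + 1) := by linarith
      exact mul_le_mul_of_nonneg_left (by linarith [hsqrt]) this
    rw [abs_neg, abs_one, zero_add] at hfinal
    have hsq : Real.sqrt ε < 1 / (2 * lam) := by
      rw [show (1 / (2 * lam)) = Real.sqrt ((1 / (2 * lam)) ^ 2) by
        rw [Real.sqrt_sq (by positivity)]]
      apply Real.sqrt_lt_sqrt hε.le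
      have : (1 / (2 * lam)) ^ 2 = 1 / (4 * lam ^ 2) := by
        field_simp; ring
      rw [this]
      calc ε ≤ 1 / (4 * lam ^ 2 + 1) := hε1
        _ < 1 / (4 * lam ^ 2) := by
            apply one_div_lt_one_div_of_lt (by positivity)
            linarith
    have : lam * (1 + 1) * Real.sqrt ε < lam * (1 + 1) * (1 / (2 * lam)) :=
      mul_lt_mul_of_pos_left hsq (by linarith)
    have heq : lam * (1 + 1) * (1 / (2 * lam)) = 1 := by
      field_simp; ring
    linarith
end
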